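/- For all natural numbers a, b, d, m, p, we have ∑_{k=0}^{a} C(a,k)·C(b,m+k)·C(p−k, a+b−d)·C(m+k,d) = C(m+p−b, m+a−d)·C(p−a, b−m)·C(b,d). -/

import Mathlib

/-- Binomial coefficient for integers: `C x y` is the usual binomial coefficient
when `0 ≤ y ≤ x`, and `0` otherwise. -/
def C (x y : ℤ) : ℤ := if 0 ≤ y ∧ y ≤ x then (x.toNat.choose y.toNat : ℤ) else 0

lemma C_of_neg {x y : ℤ} (h : y < 0) : C x y = 0 := by
  simp [C]; intro h'; omega

lemma C_of_gt {x y : ℤ} (h : x < y) : C x y = 0 := by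
  simp [C]; intro h'; omega

lemma C_nat (x y : ℕ) : C x y = x.choose y := by
  by_cases h : y ≤ x
  · simp [C, h]
  · rw [C_of_gt (by exact_mod_cast by omega), Nat.choose_eq_zero_of_lt (by omega)]
    simp

lemma C_self_zero (x : ℤ) (h : 0 ≤ x) : C x 0 = 1 := by simp [C, h]

-- Pascal
lemma C_pascal (X : ℕ) (y : ℤ) : C (X + 1) y = C X y + C X (y - 1) := by
  rcases lt_or_ge y 0 with hy | hy
  · rw [C_of_neg hy, C_of_neg hy, C_of_neg (by omega)]; ring
  · lift y to ℕ using hy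
    rcases y with _ | y'
    · have h1 : ((X : ℤ) + 1) = ((X + 1 : ℕ) : ℤ) := by push_cast; ring
      rw [h1, C_nat, C_of_neg (show ((0:ℕ):ℤ) - 1 < 0 by norm_num)]
      rw [show ((0:ℕ):ℤ) = ((0:ℕ):ℤ) from rfl, C_nat]
      simp
    · have h1 : ((X : ℤ) + 1) = ((X + 1 : ℕ) : ℤ) := by push_cast; ring
      have h2 : ((y' + 1 : ℕ) : ℤ) - 1 = ((y' : ℕ) : ℤ) := by push_cast; ring
      rw [h1, h2, C_nat, C_nat, C_nat]
      rw [show (X+1).choose (y'+1) = X.choose y' + X.choose (y'+1) from Nat.choose_succ_succ X y']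
      push_cast; ring

-- trinomial revision, fully general
lemma C_trinom (x y z : ℤ) : C x y * C y z = C x z * C (x - z) (y - z) := by
  rcases lt_or_ge z 0 with hz | hz
  · rw [C_of_neg hz, C_of_neg hz]; ring
  rcases lt_or_ge y z with hyz | hyz
  · rw [C_of_gt hyz, C_of_neg (x := x - z) (y := y - z) (by omega)]; ring
  rcases lt_or_ge x y with hxy | hxy
  · rw [C_of_gt hxy, C_of_gt (x := x - z) (y := y - z) (by omega)]; ring
  · -- 0 ≤ z ≤ y ≤ x
    lift z to ℕ using hz
    lift y to ℕ using (by omega : (0:ℤ) ≤ y)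
    lift x to ℕ using (by omega : (0:ℤ) ≤ x)
    have hyz' : z ≤ y := by exact_mod_cast hyz
    have hxy' : y ≤ x := by exact_mod_cast hxy
    have e1 : (x : ℤ) - z = ((x - z : ℕ) : ℤ) := by omega
    have e2 : (y : ℤ) - z = ((y - z : ℕ) : ℤ) := by omega
    rw [e1, e2, C_nat, C_nat, C_nat, C_nat]
    rw [← Nat.cast_mul, ← Nat.cast_mul, Nat.choose_mul (n := x) hyz']

-- symmetry
lemma C_symm (w k : ℤ) : C w k = C w (w - k) := by
  rcases lt_or_ge w 0 with hw | hw
  · rcases lt_or_ge k 0 with hk | hk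
    · rw [C_of_neg hk, C_of_gt (by omega)]
    · rw [C_of_gt (by omega), C_of_neg (by omega)]
  rcases lt_or_ge k 0 with hk | hk
  · rw [C_of_neg hk, C_of_gt (by omega)]
  rcases lt_or_ge w k with hwk | hwk
  · rw [C_of_gt hwk, C_of_neg (by omega)]
  lift w to ℕ using hw; lift k to ℕ using hk
  have hk' : k ≤ w := by exact_mod_cast hwk
  have e : (w : ℤ) - k = ((w - k : ℕ) : ℤ) := by omega
  rw [e, C_nat, C_nat, Nat.choose_symm hk']

-- L2
lemma C_trinom' (A : ℕ) (k t : ℤ) : C A k * C ((A : ℤ) - k) t = C A t * C ((A : ℤ) - t) k := by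
  have h1 := C_trinom (A : ℤ) (k + t) k
  have h2 := C_trinom (A : ℤ) (k + t) t
  have h3 : C (k + t) k = C (k + t) t := by rw [C_symm (k+t) k]; ring_nf
  have e1 : k + t - k = t := by ring
  have e2 : k + t - t = k := by ring
  rw [e1] at h1; rw [e2] at h2
  rw [← h1, h3, h2]

lemma C_vandermonde (X Y : ℕ) (n : ℤ) :
    ∑ j ∈ Finset.range (X + 1), C X j * C Y (n - j) = C ((X : ℤ) + Y) n := by
  induction X generalizing n with
  | zero =>
    simp only [Finset.sum_range_one, Nat.cast_zero, zero_add]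
    rw [C_self_zero 0 le_rfl, one_mul]; norm_num
  | succ X ih =>
    have pas : ∀ y : ℤ, C ((X:ℤ) + 1) y = C X y + C X (y - 1) := by
      intro y
      have := C_pascal X y
      exact this
    calc ∑ j ∈ Finset.range (X + 1 + 1), C (↑(X+1)) j * C Y (n - j)
        = ∑ j ∈ Finset.range (X + 1 + 1), (C X j * C Y (n - j) + C X ((j:ℤ) - 1) * C Y (n - j)) := by
          apply Finset.sum_congr rfl; intro j _
          rw [show ((X+1 : ℕ) : ℤ) = (X:ℤ) + 1 by push_cast; ring, pas]; ring
      _ = (∑ j ∈ Finset.range (X + 1 + 1), C X j * C Y (n - j))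
          + ∑ j ∈ Finset.range (X + 1 + 1), C X ((j:ℤ) - 1) * C Y (n - j) := Finset.sum_add_distrib
      _ = C ((X : ℤ) + Y) n + C ((X : ℤ) + Y) (n - 1) := by
          congr 1
          · rw [Finset.sum_range_succ, C_of_gt (x := (X:ℤ)) (y := ((X+1:ℕ):ℤ)) (by push_cast; omega)]
            rw [zero_mul, add_zero, ih]
          · rw [Finset.sum_range_succ']
            rw [C_of_neg (x := (X:ℤ)) (y := ((0:ℕ):ℤ) - 1) (by norm_num), zero_mul, add_zero]
            rw [show (∑ k ∈ Finset.range (X + 1), C (↑X) ((↑(k + 1):ℤ) - 1) * C (↑Y) (n - ↑(k + 1)))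
                  = ∑ k ∈ Finset.range (X + 1), C X k * C Y ((n-1) - k) from
                Finset.sum_congr rfl fun j _ => by push_cast; ring_nf]
            exact ih (n - 1)
      _ = C ((↑(X+1) : ℤ) + Y) n := by
          rw [show ((↑(X+1) : ℤ) + Y) = ((X + Y : ℕ) : ℤ) + 1 by push_cast; ring, C_pascal]
          push_cast; ring_nf

lemma C_vandermonde' (A B : ℕ) (M : ℤ) :
    ∑ k ∈ Finset.range (A + 1), C A k * C B (M + k) = C ((A : ℤ) + B) ((A : ℤ) + M) := by
  rw [← Finset.sum_range_reflect]
  have : ∀ j ∈ Finset.range (A + 1),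
      C A (↑(A + 1 - 1 - j)) * C B (M + ↑(A + 1 - 1 - j)) = C A j * C B (((A:ℤ) + M) - j) := by
    intro j hj
    rw [Finset.mem_range] at hj
    have hja : j ≤ A := by omega
    have e : ((A + 1 - 1 - j : ℕ) : ℤ) = (A : ℤ) - j := by omega
    rw [e, show C (A:ℤ) ((A:ℤ) - j) = C A j from (C_symm A j).symm]
    congr 1; ring
  rw [Finset.sum_congr rfl this, C_vandermonde]


theorem stmt_13 (a b d m p : ℕ) :
    ∑ k ∈ Finset.range (a + 1), C a k * C b ((m : ℤ) + k) * C ((p : ℤ) - k) ((a : ℤ) + b - d) * C ((m : ℤ) + k) d = C ((m : ℤ) + p - b) ((m : ℤ) + a - d) * C ((p : ℤ) - a) ((b : ℤ) - m) * C b d := by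
  -- Step 0: pull out C b d from each term
  have lhs_eq : ∑ k ∈ Finset.range (a + 1), C a k * C b ((m : ℤ) + k) * C ((p : ℤ) - k) ((a : ℤ) + b - d) * C ((m : ℤ) + k) d
      = C b d * ∑ k ∈ Finset.range (a + 1),
          C a k * C ((b:ℤ) - d) ((m:ℤ) + k - d) * C ((p:ℤ) - k) ((a:ℤ) + b - d) := by
    rw [Finset.mul_sum]
    apply Finset.sum_congr rfl
    intro k _
    have h0 := C_trinom (b : ℤ) ((m:ℤ) + k) (d : ℤ)
    linear_combination (C (a:ℤ) (k:ℤ) * C ((p:ℤ) - k) ((a:ℤ) + b - d)) * h0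
  rw [lhs_eq]
  by_cases hbd : d ≤ b
  swap
  · rw [C_of_gt (x := (b:ℤ)) (y := (d:ℤ)) (by exact_mod_cast by omega)]
    ring
  -- now d ≤ b
  suffices hS : (∑ k ∈ Finset.range (a + 1),
      C a k * C ((b:ℤ) - d) ((m:ℤ) + k - d) * C ((p:ℤ) - k) ((a:ℤ) + b - d))
      = C ((m : ℤ) + p - b) ((m : ℤ) + a - d) * C ((p : ℤ) - a) ((b : ℤ) - m) by
    rw [hS]; ring
  by_cases hpa : a ≤ p
  swap
  · -- p < a : both sides vanish
    rw [Finset.sum_eq_zero, eq_comm]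
    · rcases lt_or_ge ((b:ℤ) - m) 0 with h | h
      · rw [C_of_neg (x := (p:ℤ) - a) (y := (b:ℤ) - m) h]; ring
      · rw [C_of_gt (x := (p:ℤ) - a) (y := (b:ℤ) - m) (by omega)]; ring
    · intro k hk
      rw [C_of_gt (x := (p:ℤ) - k) (y := (a:ℤ) + b - d) (by
        simp only [Finset.mem_range] at hk
        have : (0:ℤ) ≤ (k:ℤ) := by positivity
        omega)]
      ring
  -- a ≤ p and d ≤ b
  set P : ℕ := p - a with hPdef
  set B : ℕ := b - d with hBdef
  have hP : (p:ℤ) - a = (P:ℤ) := by omega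
  have hB : (b:ℤ) - d = (B:ℤ) := by omega
  -- Step 1: expand C (p-k) (a+b-d) by Vandermonde
  have step1 : (∑ k ∈ Finset.range (a + 1),
      C a k * C ((b:ℤ) - d) ((m:ℤ) + k - d) * C ((p:ℤ) - k) ((a:ℤ) + b - d))
      = ∑ j ∈ Finset.range (P + 1), ∑ k ∈ Finset.range (a + 1),
          C (P:ℤ) j * (C a k * C ((a:ℤ) - k) ((a:ℤ) + B - j) * C (B:ℤ) ((m:ℤ) - d + k)) := by
    rw [Finset.sum_comm]
    apply Finset.sum_congr rfl
    intro k hk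
    simp only [Finset.mem_range] at hk
    have hka : k ≤ a := by omega
    have hV := C_vandermonde P (a - k) ((a:ℤ) + B)
    have e1 : ((P:ℤ) + ((a - k : ℕ):ℤ)) = (p:ℤ) - k := by omega
    have e2 : ((a - k : ℕ) : ℤ) = (a:ℤ) - k := by omega
    rw [e1, e2] at hV
    have e3 : (a:ℤ) + b - d = (a:ℤ) + B := by omega
    rw [e3, ← hV, Finset.mul_sum]
    apply Finset.sum_congr rfl
    intro j _
    rw [hB]
    ring
  rw [step1]
  -- Step 2: evaluate inner sum over k
  have step2 : ∀ j ∈ Finset.range (P + 1),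
      (∑ k ∈ Finset.range (a + 1),
        C (P:ℤ) j * (C a k * C ((a:ℤ) - k) ((a:ℤ) + B - j) * C (B:ℤ) ((m:ℤ) - d + k)))
      = C (P:ℤ) j * (C (a:ℤ) ((a:ℤ) + B - j) * C (j:ℤ) ((j:ℤ) + m - b)) := by
    intro j _
    rw [← Finset.mul_sum]
    congr 1
    have trin : ∀ k : ℕ, C (a:ℤ) k * C ((a:ℤ) - k) ((a:ℤ) + B - j)
        = C (a:ℤ) ((a:ℤ) + B - j) * C ((a:ℤ) - ((a:ℤ) + B - j)) k :=
      fun k => C_trinom' a k ((a:ℤ) + B - j)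
    by_cases hj : B ≤ j ∧ j ≤ a + B
    · -- main case
      obtain ⟨hj1, hj2⟩ := hj
      have et : (a:ℤ) + B - j = ((a + B - j : ℕ) : ℤ) := by omega
      have eat : (a:ℤ) - ((a:ℤ) + B - j) = ((j - B : ℕ) : ℤ) := by omega
      have hsum : (∑ k ∈ Finset.range (a + 1),
          C (a:ℤ) k * C ((a:ℤ) - k) ((a:ℤ) + B - j) * C (B:ℤ) ((m:ℤ) - d + k))
          = C (a:ℤ) ((a:ℤ) + B - j) *
            ∑ k ∈ Finset.range (a + 1), C ((j - B : ℕ):ℤ) k * C (B:ℤ) (((m:ℤ) - d) + k) := by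
        rw [Finset.mul_sum]
        apply Finset.sum_congr rfl
        intro k _
        rw [trin k, eat]
        ring
      rw [hsum]
      congr 1
      -- shrink the range to j - B + 1 then apply reverse Vandermonde
      have hjBa : j - B ≤ a := by omega
      have hsub : Finset.range (j - B + 1) ⊆ Finset.range (a + 1) := by
        apply Finset.range_subset_range.mpr; omega
      rw [← Finset.sum_subset hsub (by
        intro k _ hk2
        simp only [Finset.mem_range, not_lt] at hk2
        rw [C_of_gt (x := ((j - B : ℕ):ℤ)) (y := (k:ℤ)) (by exact_mod_cast by omega)]
        ring)]
      rw [C_vandermonde' (j - B) B ((m:ℤ) - d)]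
      congr 1 <;> omega
    · -- degenerate case: C a (a+B-j) = 0
      have hz : C (a:ℤ) ((a:ℤ) + B - j) = 0 := by
        rcases not_and_or.mp hj with h | h
        · exact C_of_gt (by omega)
        · exact C_of_neg (by omega)
      rw [hz, zero_mul, Finset.sum_eq_zero]
      intro k _
      rw [trin k, hz]
      ring
  rw [Finset.sum_congr rfl step2]
  -- Step 3: trinomial revision on C P j * C j (b - m)
  have step3 : ∀ j ∈ Finset.range (P + 1),
      C (P:ℤ) j * (C (a:ℤ) ((a:ℤ) + B - j) * C (j:ℤ) ((j:ℤ) + m - b))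
      = C (P:ℤ) ((b:ℤ) - m) *
          (C ((P:ℤ) - ((b:ℤ) - m)) ((j:ℤ) - ((b:ℤ) - m)) * C (a:ℤ) ((a:ℤ) + B - j)) := by
    intro j _
    have hsymm : C (j:ℤ) ((j:ℤ) + m - b) = C (j:ℤ) ((b:ℤ) - m) := by
      rw [C_symm (j:ℤ) ((b:ℤ) - m)]
      congr 1; ring
    have htr := C_trinom (P:ℤ) (j:ℤ) ((b:ℤ) - m)
    rw [hsymm]
    linear_combination (C (a:ℤ) ((a:ℤ) + B - j)) * htr
  rw [Finset.sum_congr rfl step3, ← Finset.mul_sum]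
  -- Step 4: final case split and Vandermonde
  by_cases hbm : m ≤ b ∧ b - m ≤ P
  swap
  · have hz : C (P:ℤ) ((b:ℤ) - m) = 0 := by
      rcases not_and_or.mp hbm with h | h
      · exact C_of_neg (by omega)
      · exact C_of_gt (by omega)
    rw [hz, zero_mul, hP, hz]
    ring
  obtain ⟨hmb, hbmP⟩ := hbm
  set s : ℕ := b - m with hsdef
  set Q : ℕ := P - s with hQdef
  have hQ : (P:ℤ) - ((b:ℤ) - m) = (Q:ℤ) := by omega
  have hsum : (∑ j ∈ Finset.range (P + 1),
      C ((P:ℤ) - ((b:ℤ) - m)) ((j:ℤ) - ((b:ℤ) - m)) * C (a:ℤ) ((a:ℤ) + B - j))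
      = C ((m:ℤ) + p - b) ((m:ℤ) + a - d) := by
    have hsplit : ∀ j : ℕ, C ((P:ℤ) - ((b:ℤ) - m)) ((j:ℤ) - ((b:ℤ) - m)) * C (a:ℤ) ((a:ℤ) + B - j)
        = C (Q:ℤ) ((j:ℤ) - s) * C (a:ℤ) ((a:ℤ) + B - j) := by
      intro j
      rw [hQ, show (j:ℤ) - ((b:ℤ) - m) = (j:ℤ) - s by omega]
    rw [Finset.sum_congr rfl (fun j _ => hsplit j)]
    rw [Finset.range_eq_Ico, ← Finset.sum_Ico_consecutive _ (Nat.zero_le s) (by omega : s ≤ P + 1)]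
    rw [Finset.sum_eq_zero (fun j hj => by
      simp only [Finset.mem_Ico] at hj
      rw [C_of_neg (x := (Q:ℤ)) (y := (j:ℤ) - s) (by omega)]
      ring), zero_add]
    rw [Finset.sum_Ico_eq_sum_range]
    have hrange : P + 1 - s = Q + 1 := by omega
    rw [hrange]
    have : ∀ i ∈ Finset.range (Q + 1),
        C (Q:ℤ) ((↑(s + i):ℤ) - s) * C (a:ℤ) ((a:ℤ) + B - ↑(s + i))
        = C (Q:ℤ) i * C (a:ℤ) (((a:ℤ) + B - s) - i) := by
      intro i _
      congr 2 <;> push_cast <;> ring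
    rw [Finset.sum_congr rfl this, C_vandermonde Q a ((a:ℤ) + B - s)]
    congr 1 <;> omega
  rw [hsum, hP]
  ring
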